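/- Let Y ∈ ℝⁿ, let B be a real n×L matrix with ‖B‖₂ ≤ B*, let R > 0, and let C(φ), C(φ') be real symmetric n×n matrices, each with eigenvalues bounded below by λ_min > 0, satisfying ‖C(φ) − C(φ')‖₂ ≤ L_φ ‖φ − φ'‖₂ for parameters φ, φ' ∈ ℝˡ. Define Q(β, φ) = (Y − Bβ)ᵀ C(φ)⁻¹ (Y − Bβ). Then for all β, β' ∈ ℝᴸ with ‖β‖₂ ≤ R and ‖β'‖₂ ≤ R: |Q(β, φ) − Q(β', φ')| ≤ 𝓛(Y) · ‖(β, φ) − (β', φ')‖₂, where 𝓛(Y) = √2 · max{ (L_φ / λ_min²) · ( ‖Y‖₂² + 2 B* R ‖Y‖₂ + (B* R)² ), (B* / λ_min) · ( 2‖Y‖₂ + 2 B* R ) } and ‖(β, φ) − (β', φ')‖₂ = √(‖β − β'‖₂² + ‖φ − φ'‖₂²). -/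

import Mathlib

open Matrix

/-- The Euclidean norm `‖x‖₂ = √(Σᵢ xᵢ²)` of a vector `x ∈ ℝⁿ`. -/
noncomputable def vnorm {n : ℕ} (x : Fin n → ℝ) : ℝ :=
  Real.sqrt (∑ i, (x i) ^ 2)

/-- The spectral (operator ℓ²) norm of a real `m × n` matrix: the operator norm
of the induced linear map between Euclidean spaces. -/
noncomputable def specNorm {m n : ℕ} (A : Matrix (Fin m) (Fin n) ℝ) : ℝ :=
  ‖LinearMap.toContinuousLinearMap (Matrix.toEuclideanLin A)‖

/-- The quadratic form `Q(β, φ) = (Y − Bβ)ᵀ C(φ)⁻¹ (Y − Bβ)`. -/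
noncomputable def quadForm {n L l : ℕ} (Y : Fin n → ℝ)
    (B : Matrix (Fin n) (Fin L) ℝ) (Cm : (Fin l → ℝ) → Matrix (Fin n) (Fin n) ℝ)
    (β : Fin L → ℝ) (φ : Fin l → ℝ) : ℝ :=
  (Y - B.mulVec β) ⬝ᵥ (Cm φ)⁻¹.mulVec (Y - B.mulVec β)

/-- The stochastic Lipschitz coefficient `𝓛(Y)` on the parameter ball of radius `R`:
`𝓛(Y) = √2 · max{ (L_φ/λ_min²)(‖Y‖² + 2B*R‖Y‖ + (B*R)²), (B*/λ_min)(2‖Y‖ + 2B*R) }`. -/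
noncomputable def stochLipCoeff {n : ℕ} (Y : Fin n → ℝ)
    (Bstar R lmin Lphi : ℝ) : ℝ :=
  Real.sqrt 2 *
    max ((Lphi / lmin ^ 2) * (vnorm Y ^ 2 + 2 * Bstar * R * vnorm Y + (Bstar * R) ^ 2))
      ((Bstar / lmin) * (2 * vnorm Y + 2 * Bstar * R))

/-! ### Auxiliary lemmas -/

/-- View a plain vector as an element of Euclidean space. -/
noncomputable def eVec {n : ℕ} (x : Fin n → ℝ) : EuclideanSpace ℝ (Fin n) :=
  (WithLp.equiv 2 (Fin n → ℝ)).symm x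

lemma vnorm_eq {n : ℕ} (x : Fin n → ℝ) : vnorm x = ‖eVec x‖ := by
  simp [vnorm, eVec, EuclideanSpace.norm_eq, Real.norm_eq_abs, sq_abs]

lemma vnorm_nonneg {n : ℕ} (x : Fin n → ℝ) : 0 ≤ vnorm x := Real.sqrt_nonneg _

lemma vnorm_sq {n : ℕ} (x : Fin n → ℝ) : vnorm x ^ 2 = x ⬝ᵥ x := by
  rw [vnorm, Real.sq_sqrt (Finset.sum_nonneg fun i _ => sq_nonneg _)]
  simp [dotProduct, sq]

lemma dot_eq_inner {n : ℕ} (x y : Fin n → ℝ) : x ⬝ᵥ y = (inner ℝ (eVec x) (eVec y) : ℝ) := by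
  simp [dotProduct, PiLp.inner_apply, eVec, RCLike.inner_apply, mul_comm]

lemma abs_dot_le {n : ℕ} (x y : Fin n → ℝ) : |x ⬝ᵥ y| ≤ vnorm x * vnorm y := by
  rw [dot_eq_inner, vnorm_eq, vnorm_eq]
  exact abs_real_inner_le_norm _ _

lemma dot_le {n : ℕ} (x y : Fin n → ℝ) : x ⬝ᵥ y ≤ vnorm x * vnorm y :=
  le_trans (le_abs_self _) (abs_dot_le x y)

lemma specNorm_nonneg {m n : ℕ} (A : Matrix (Fin m) (Fin n) ℝ) : 0 ≤ specNorm A :=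
  norm_nonneg _

lemma specNorm_neg {m n : ℕ} (A : Matrix (Fin m) (Fin n) ℝ) : specNorm (-A) = specNorm A := by
  simp [specNorm, map_neg]

lemma vnorm_mulVec_le {m n : ℕ} (A : Matrix (Fin m) (Fin n) ℝ) (x : Fin n → ℝ) :
    vnorm (A.mulVec x) ≤ specNorm A * vnorm x := by
  rw [vnorm_eq, vnorm_eq]
  have h : eVec (A.mulVec x) = (LinearMap.toContinuousLinearMap (Matrix.toEuclideanLin A)) (eVec x) := rfl
  rw [h]
  exact (LinearMap.toContinuousLinearMap _).le_opNorm _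

lemma vnorm_sub_le {n : ℕ} (x y : Fin n → ℝ) : vnorm (x - y) ≤ vnorm x + vnorm y := by
  rw [vnorm_eq, vnorm_eq, vnorm_eq]
  have h : eVec (x - y) = eVec x - eVec y := rfl
  rw [h]
  exact norm_sub_le _ _

lemma quad_lower {n : ℕ} {lmin : ℝ} {C : Matrix (Fin n) (Fin n) ℝ}
    (hC : (C - lmin • (1 : Matrix (Fin n) (Fin n) ℝ)).PosSemidef)
    (x : Fin n → ℝ) : lmin * (x ⬝ᵥ x) ≤ x ⬝ᵥ C.mulVec x := by
  have h := hC.dotProduct_mulVec_nonneg x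
  simp only [star_trivial, sub_mulVec, dotProduct_sub, smul_mulVec, one_mulVec,
    dotProduct_smul, smul_eq_mul] at h
  linarith

lemma C_isUnit_det {n : ℕ} {lmin : ℝ} {C : Matrix (Fin n) (Fin n) ℝ} (hl : 0 < lmin)
    (hs : C.IsSymm)
    (hC : (C - lmin • (1 : Matrix (Fin n) (Fin n) ℝ)).PosSemidef) : IsUnit C.det := by
  have hpd : C.PosDef := by
    apply Matrix.PosDef.of_dotProduct_mulVec_pos
    · rw [Matrix.IsHermitian]
      simpa [conjTranspose_eq_transpose_of_trivial, Matrix.IsSymm] using hs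
    · intro x hx
      have h1 := quad_lower hC x
      have h2 : 0 < x ⬝ᵥ x := by
        have hne : x ⬝ᵥ x ≠ 0 := fun h => hx (dotProduct_self_eq_zero.mp h)
        have hn : 0 ≤ x ⬝ᵥ x := Finset.sum_nonneg fun i _ => mul_self_nonneg _
        exact lt_of_le_of_ne hn (Ne.symm hne)
      simp only [star_trivial]
      nlinarith
  exact hpd.isUnit.map (Matrix.detMonoidHom)

lemma inv_mulVec_bound {n : ℕ} {lmin : ℝ} {C : Matrix (Fin n) (Fin n) ℝ} (hl : 0 < lmin)
    (hd : IsUnit C.det)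
    (hC : (C - lmin • (1 : Matrix (Fin n) (Fin n) ℝ)).PosSemidef)
    (x : Fin n → ℝ) : vnorm (C⁻¹.mulVec x) ≤ (1 / lmin) * vnorm x := by
  set y := C⁻¹.mulVec x with hy
  have hCy : C.mulVec y = x := by
    rw [hy, mulVec_mulVec, mul_nonsing_inv _ hd, one_mulVec]
  have h1 : lmin * (y ⬝ᵥ y) ≤ y ⬝ᵥ x := by
    have := quad_lower hC y
    rwa [hCy] at this
  have h2 : y ⬝ᵥ x ≤ vnorm y * vnorm x := dot_le y x
  have h3 : lmin * vnorm y ^ 2 ≤ vnorm y * vnorm x := by rw [vnorm_sq]; linarith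
  rcases eq_or_lt_of_le (vnorm_nonneg y) with h | h
  · rw [← h]
    exact mul_nonneg (by positivity) (vnorm_nonneg x)
  · have h4 : lmin * vnorm y ≤ vnorm x := by nlinarith
    calc vnorm y = (1 / lmin) * (lmin * vnorm y) := by field_simp
      _ ≤ (1 / lmin) * vnorm x := mul_le_mul_of_nonneg_left h4 (by positivity)

lemma inv_diff_eq {n : ℕ} {C C' : Matrix (Fin n) (Fin n) ℝ}
    (hd : IsUnit C.det) (hd' : IsUnit C'.det) :
    C⁻¹ - C'⁻¹ = C⁻¹ * (C' - C) * C'⁻¹ := by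
  rw [mul_sub, sub_mul, mul_assoc, mul_nonsing_inv _ hd', mul_one, nonsing_inv_mul _ hd, one_mul]

lemma comb_le {a b u v M : ℝ} (ha : a ≤ M) (hb : b ≤ M) (hu : 0 ≤ u) (hv : 0 ≤ v) :
    a * u + b * v ≤ M * (v + u) := by nlinarith

set_option maxHeartbeats 1000000 in
/-- **Stochastic Lipschitz bound for the quadratic term** on the compact parameter
ball of radius `R`: for `‖β‖₂ ≤ R`, `‖β'‖₂ ≤ R`,
`|Q(β,φ) − Q(β',φ')| ≤ 𝓛(Y) · √(‖β − β'‖₂² + ‖φ − φ'‖₂²)`. -/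
theorem quadForm_stochastic_lipschitz {n L l : ℕ} (Y : Fin n → ℝ)
    (B : Matrix (Fin n) (Fin L) ℝ) (Bstar R : ℝ) (hB : specNorm B ≤ Bstar)
    (hR : 0 < R)
    (Cm : (Fin l → ℝ) → Matrix (Fin n) (Fin n) ℝ)
    (lmin Lphi : ℝ) (hl : 0 < lmin) (φ φ' : Fin l → ℝ)
    (hsymm : (Cm φ).IsSymm) (hsymm' : (Cm φ').IsSymm)
    (hpsd : (Cm φ - lmin • (1 : Matrix (Fin n) (Fin n) ℝ)).PosSemidef)
    (hpsd' : (Cm φ' - lmin • (1 : Matrix (Fin n) (Fin n) ℝ)).PosSemidef)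
    (hLip : specNorm (Cm φ - Cm φ') ≤ Lphi * vnorm (φ - φ'))
    (β β' : Fin L → ℝ) (hβ : vnorm β ≤ R) (hβ' : vnorm β' ≤ R) :
    |quadForm Y B Cm β φ - quadForm Y B Cm β' φ'| ≤
      stochLipCoeff Y Bstar R lmin Lphi *
        Real.sqrt (vnorm (β - β') ^ 2 + vnorm (φ - φ') ^ 2) := by
  have hBs : 0 ≤ Bstar := le_trans (specNorm_nonneg B) hB
  have hd : IsUnit (Cm φ).det := C_isUnit_det hl hsymm hpsd
  have hd' : IsUnit (Cm φ').det := C_isUnit_det hl hsymm' hpsd'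
  set r := Y - B.mulVec β with hr_def
  set r' := Y - B.mulVec β' with hr'_def
  set nY := vnorm Y with hnY
  set S := nY + Bstar * R with hS
  -- bounds on residuals
  have hmul : ∀ v : Fin L → ℝ, vnorm v ≤ R → vnorm (B.mulVec v) ≤ Bstar * R := by
    intro v hv
    calc vnorm (B.mulVec v) ≤ specNorm B * vnorm v := vnorm_mulVec_le B v
      _ ≤ Bstar * R := mul_le_mul hB hv (vnorm_nonneg v) hBs
  have hr : vnorm r ≤ S := le_trans (vnorm_sub_le Y (B.mulVec β)) (by
    have := hmul β hβ; simp only [hS, hnY]; linarith)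
  have hr' : vnorm r' ≤ S := le_trans (vnorm_sub_le Y (B.mulVec β')) (by
    have := hmul β' hβ'; simp only [hS, hnY]; linarith)
  have hSnn : 0 ≤ S := le_trans (vnorm_nonneg Y) (by simp only [hS]; nlinarith)
  set nφ := vnorm (φ - φ') with hnφ
  set nb := vnorm (β - β') with hnb
  have hnφnn : 0 ≤ nφ := vnorm_nonneg _
  have hnbnn : 0 ≤ nb := vnorm_nonneg _
  -- difference of residuals
  have hrr' : r - r' = B.mulVec (β' - β) := by
    simp only [hr_def, hr'_def, Matrix.mulVec_sub]
    abel
  have hrr'_bound : vnorm (r - r') ≤ Bstar * nb := by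
    rw [hrr']
    calc vnorm (B.mulVec (β' - β)) ≤ specNorm B * vnorm (β' - β) := vnorm_mulVec_le _ _
      _ ≤ Bstar * nb := by
          have : β' - β = -(β - β') := by abel
          rw [this, hnb]
          have hneg : vnorm (-(β - β')) = vnorm (β - β') := by
            rw [vnorm_eq, vnorm_eq]
            have h : eVec (-(β - β')) = -(eVec (β - β')) := rfl
            rw [h, norm_neg]
          rw [hneg]
          exact mul_le_mul_of_nonneg_right hB (vnorm_nonneg _)
  -- bound for any C⁻¹·w
  have hinv := inv_mulVec_bound hl hd hpsd
  have hinv' := inv_mulVec_bound hl hd' hpsd'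
  -- Δ₁ : change in φ
  have hΔ1 : |r ⬝ᵥ (Cm φ)⁻¹.mulVec r - r ⬝ᵥ (Cm φ')⁻¹.mulVec r| ≤
      (1 / lmin) * (1 / lmin) * (Lphi * nφ) * (S * S) := by
    have key : r ⬝ᵥ (Cm φ)⁻¹.mulVec r - r ⬝ᵥ (Cm φ')⁻¹.mulVec r =
        r ⬝ᵥ (Cm φ)⁻¹.mulVec ((Cm φ' - Cm φ).mulVec ((Cm φ')⁻¹.mulVec r)) := by
      calc r ⬝ᵥ (Cm φ)⁻¹.mulVec r - r ⬝ᵥ (Cm φ')⁻¹.mulVec r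
          = r ⬝ᵥ ((Cm φ)⁻¹ - (Cm φ')⁻¹).mulVec r := by
            rw [sub_mulVec, dotProduct_sub]
        _ = r ⬝ᵥ ((Cm φ)⁻¹ * (Cm φ' - Cm φ) * (Cm φ')⁻¹).mulVec r := by
            rw [inv_diff_eq hd hd']
        _ = r ⬝ᵥ (Cm φ)⁻¹.mulVec ((Cm φ' - Cm φ).mulVec ((Cm φ')⁻¹.mulVec r)) := by
            rw [mulVec_mulVec, mulVec_mulVec, Matrix.mul_assoc]
    rw [key]
    have hspec : specNorm (Cm φ' - Cm φ) ≤ Lphi * nφ := by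
      have : Cm φ' - Cm φ = -(Cm φ - Cm φ') := by abel
      rw [this, specNorm_neg]
      exact hLip
    have hLn : 0 ≤ Lphi * nφ := le_trans (specNorm_nonneg _) hspec
    have step1 : vnorm ((Cm φ')⁻¹.mulVec r) ≤ (1 / lmin) * S := by
      calc vnorm ((Cm φ')⁻¹.mulVec r) ≤ (1 / lmin) * vnorm r := hinv' r
        _ ≤ (1 / lmin) * S := by
            apply mul_le_mul_of_nonneg_left hr; positivity
    have step2 : vnorm ((Cm φ' - Cm φ).mulVec ((Cm φ')⁻¹.mulVec r)) ≤
        (Lphi * nφ) * ((1 / lmin) * S) := by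
      calc vnorm ((Cm φ' - Cm φ).mulVec ((Cm φ')⁻¹.mulVec r))
          ≤ specNorm (Cm φ' - Cm φ) * vnorm ((Cm φ')⁻¹.mulVec r) := vnorm_mulVec_le _ _
        _ ≤ (Lphi * nφ) * ((1 / lmin) * S) :=
            mul_le_mul hspec step1 (vnorm_nonneg _) hLn
    have step3 : vnorm ((Cm φ)⁻¹.mulVec ((Cm φ' - Cm φ).mulVec ((Cm φ')⁻¹.mulVec r))) ≤
        (1 / lmin) * ((Lphi * nφ) * ((1 / lmin) * S)) := by
      calc vnorm ((Cm φ)⁻¹.mulVec ((Cm φ' - Cm φ).mulVec ((Cm φ')⁻¹.mulVec r)))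
          ≤ (1 / lmin) * vnorm ((Cm φ' - Cm φ).mulVec ((Cm φ')⁻¹.mulVec r)) := hinv _
        _ ≤ (1 / lmin) * ((Lphi * nφ) * ((1 / lmin) * S)) := by
            apply mul_le_mul_of_nonneg_left step2; positivity
    calc |r ⬝ᵥ (Cm φ)⁻¹.mulVec ((Cm φ' - Cm φ).mulVec ((Cm φ')⁻¹.mulVec r))|
        ≤ vnorm r * vnorm ((Cm φ)⁻¹.mulVec ((Cm φ' - Cm φ).mulVec ((Cm φ')⁻¹.mulVec r))) :=
          abs_dot_le _ _
      _ ≤ S * ((1 / lmin) * ((Lphi * nφ) * ((1 / lmin) * S))) :=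
          mul_le_mul hr step3 (vnorm_nonneg _) hSnn
      _ = (1 / lmin) * (1 / lmin) * (Lphi * nφ) * (S * S) := by ring
  -- Δ₂ : change in β
  have hΔ2 : |r ⬝ᵥ (Cm φ')⁻¹.mulVec r - r' ⬝ᵥ (Cm φ')⁻¹.mulVec r'| ≤
      (1 / lmin) * (Bstar * nb) * (2 * S) := by
    have key : r ⬝ᵥ (Cm φ')⁻¹.mulVec r - r' ⬝ᵥ (Cm φ')⁻¹.mulVec r' =
        (r - r') ⬝ᵥ (Cm φ')⁻¹.mulVec r + r' ⬝ᵥ (Cm φ')⁻¹.mulVec (r - r') := by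
      simp only [Matrix.mulVec_sub, sub_dotProduct, dotProduct_sub]
      ring
    rw [key]
    have b1 : |(r - r') ⬝ᵥ (Cm φ')⁻¹.mulVec r| ≤ (Bstar * nb) * ((1 / lmin) * S) := by
      calc |(r - r') ⬝ᵥ (Cm φ')⁻¹.mulVec r|
          ≤ vnorm (r - r') * vnorm ((Cm φ')⁻¹.mulVec r) := abs_dot_le _ _
        _ ≤ (Bstar * nb) * ((1 / lmin) * S) := by
            apply mul_le_mul hrr'_bound _ (vnorm_nonneg _) (by positivity)
            calc vnorm ((Cm φ')⁻¹.mulVec r) ≤ (1 / lmin) * vnorm r := hinv' r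
              _ ≤ (1 / lmin) * S := by apply mul_le_mul_of_nonneg_left hr; positivity
    have b2 : |r' ⬝ᵥ (Cm φ')⁻¹.mulVec (r - r')| ≤ S * ((1 / lmin) * (Bstar * nb)) := by
      calc |r' ⬝ᵥ (Cm φ')⁻¹.mulVec (r - r')|
          ≤ vnorm r' * vnorm ((Cm φ')⁻¹.mulVec (r - r')) := abs_dot_le _ _
        _ ≤ S * ((1 / lmin) * (Bstar * nb)) := by
            apply mul_le_mul hr' _ (vnorm_nonneg _) hSnn
            calc vnorm ((Cm φ')⁻¹.mulVec (r - r')) ≤ (1 / lmin) * vnorm (r - r') := hinv' _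
              _ ≤ (1 / lmin) * (Bstar * nb) := by
                  apply mul_le_mul_of_nonneg_left hrr'_bound; positivity
    calc |(r - r') ⬝ᵥ (Cm φ')⁻¹.mulVec r + r' ⬝ᵥ (Cm φ')⁻¹.mulVec (r - r')|
        ≤ |(r - r') ⬝ᵥ (Cm φ')⁻¹.mulVec r| + |r' ⬝ᵥ (Cm φ')⁻¹.mulVec (r - r')| := abs_add_le _ _
      _ ≤ (Bstar * nb) * ((1 / lmin) * S) + S * ((1 / lmin) * (Bstar * nb)) := add_le_add b1 b2
      _ = (1 / lmin) * (Bstar * nb) * (2 * S) := by ring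
  -- combine
  set a := (Lphi / lmin ^ 2) * (nY ^ 2 + 2 * Bstar * R * nY + (Bstar * R) ^ 2) with ha
  set b := (Bstar / lmin) * (2 * nY + 2 * Bstar * R) with hb
  have haM : (1 / lmin) * (1 / lmin) * (Lphi * nφ) * (S * S) = a * nφ := by
    rw [ha, hS]; field_simp; ring
  have hbM : (1 / lmin) * (Bstar * nb) * (2 * S) = b * nb := by
    rw [hb, hS]; field_simp
  have htotal : |quadForm Y B Cm β φ - quadForm Y B Cm β' φ'| ≤ a * nφ + b * nb := by
    have hsplit : quadForm Y B Cm β φ - quadForm Y B Cm β' φ' =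
        (r ⬝ᵥ (Cm φ)⁻¹.mulVec r - r ⬝ᵥ (Cm φ')⁻¹.mulVec r) +
        (r ⬝ᵥ (Cm φ')⁻¹.mulVec r - r' ⬝ᵥ (Cm φ')⁻¹.mulVec r') := by
      simp only [quadForm, hr_def, hr'_def]; ring
    rw [hsplit]
    refine le_trans (abs_add_le _ _) ?_
    rw [← haM, ← hbM]
    exact add_le_add hΔ1 hΔ2
  have hM : a * nφ + b * nb ≤ max a b * (nb + nφ) :=
    comb_le (le_max_left a b) (le_max_right a b) hnφnn hnbnn
  have hnYnn : 0 ≤ nY := vnorm_nonneg Y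
  have hbnn : 0 ≤ b := by
    rw [hb]
    apply mul_nonneg (div_nonneg hBs hl.le)
    nlinarith
  have hMnn : 0 ≤ max a b := le_trans hbnn (le_max_right a b)
  have hsum_sqrt : nb + nφ ≤ Real.sqrt 2 * Real.sqrt (nb ^ 2 + nφ ^ 2) := by
    rw [← Real.sqrt_mul (by norm_num)]
    have : nb + nφ = Real.sqrt ((nb + nφ) ^ 2) := (Real.sqrt_sq (by linarith)).symm
    rw [this]
    apply Real.sqrt_le_sqrt
    nlinarith [sq_nonneg (nb - nφ)]
  calc |quadForm Y B Cm β φ - quadForm Y B Cm β' φ'| ≤ a * nφ + b * nb := htotal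
    _ ≤ max a b * (nb + nφ) := hM
    _ ≤ max a b * (Real.sqrt 2 * Real.sqrt (nb ^ 2 + nφ ^ 2)) :=
        mul_le_mul_of_nonneg_left hsum_sqrt hMnn
    _ = stochLipCoeff Y Bstar R lmin Lphi * Real.sqrt (vnorm (β - β') ^ 2 + vnorm (φ - φ') ^ 2) := by
        rw [stochLipCoeff, hnb, hnφ, ha, hb, hnY]; ring
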